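/- Let f ∈ A^{-θ}, i.e., θ(f) = −f. Then θ extends uniquely to an involution of A_f, and the contraction algebra of (A_f, θ) is canonically isomorphic to the localization of 𝐀 at the element √t·f ∈ 𝐀. -/

import Mathlib

open LaurentPolynomial

/-- The contraction algebra `𝐀`: the `k[t]`-subalgebra of `A[√t^{±1}]`
(with `t = (√t)²`) generated by `A^θ` and `(1/√t)·A^{-θ}`. -/
noncomputable def contraction (k A : Type*) [CommRing k] [CommRing A] [Algebra k A]
    (θ : A →ₐ[k] A) : Subalgebra k (LaurentPolynomial A) :=
  Algebra.adjoin k (insert (T 2)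
    ({f | ∃ a, θ a = a ∧ f = C a} ∪ {f | ∃ a, θ a = -a ∧ f = C a * T (-1)}))

theorem CMulT_mem_contraction {k A : Type*} [CommRing k] [CommRing A] [Algebra k A]
    (θ : A →ₐ[k] A) {f : A} (hf : θ f = -f) :
    (C f * T 1 : LaurentPolynomial A) ∈ contraction k A θ := by
  have h1 : (C f * T (-1) : LaurentPolynomial A) ∈ contraction k A θ :=
    Algebra.subset_adjoin (Set.mem_insert_iff.mpr
      (Or.inr (Set.mem_union_right _ ⟨f, hf, rfl⟩)))
  have h2 : (T 2 : LaurentPolynomial A) ∈ contraction k A θ :=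
    Algebra.subset_adjoin (Set.mem_insert _ _)
  have hmul := mul_mem h1 h2
  have heq : (C f * T (-1) * T 2 : LaurentPolynomial A) = C f * T 1 := by
    rw [mul_assoc, ← T_add]; norm_num
  rwa [heq] at hmul


section AuxLemmas

lemma phi_coeff {k A R : Type*} [CommRing k] [CommRing A] [Algebra k A]
    [CommRing R] [Algebra k R] (g : A →+* R)
    (Φ : LaurentPolynomial A →ₐ[k] LaurentPolynomial R)
    (hΦ : ∀ (a : A) (n : ℤ), Φ (C a * T n) = C (g a) * T n)
    (p : LaurentPolynomial A) (n : ℤ) : (Φ p).coeff n = g (p.coeff n) := by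
  induction p using LaurentPolynomial.induction_on' with
  | add p q hp hq => rw [map_add]; erw [AddMonoidAlgebra.coeff_add, AddMonoidAlgebra.coeff_add, Finsupp.add_apply, Finsupp.add_apply]; rw [hp, hq, map_add]
  | C_mul_T m a =>
      rw [hΦ, ← single_eq_C_mul_T, ← single_eq_C_mul_T, AddMonoidAlgebra.coeff_single,
        AddMonoidAlgebra.coeff_single, Finsupp.single_apply,
        Finsupp.single_apply, apply_ite g, map_zero]

lemma exists_pow_annihilates {A : Type*} [CommRing A] (f : A)
    (p : LaurentPolynomial A)
    (hp : ∀ n : ℤ, algebraMap A (Localization.Away f) (p.coeff n) = 0) :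
    ∃ N : ℕ, C (f ^ N) * p = 0 := by
  have key : ∀ n : ℤ, ∃ m : ℕ, f ^ m * p.coeff n = 0 := by
    intro n
    obtain ⟨m, hm⟩ := IsLocalization.Away.exists_of_eq (S := Localization.Away f) (x := f)
      (a := p.coeff n) (b := 0) (by rw [hp n, map_zero])
    exact ⟨m, by simpa using hm⟩
  choose m hm using key
  refine ⟨p.coeff.support.sup m, ?_⟩
  ext n
  rw [← single_eq_C]
  erw [AddMonoidAlgebra.coeff_single_zero_mul]
  rw [AddMonoidAlgebra.coeff_zero, Finsupp.coe_zero, Pi.zero_apply]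
  by_cases hn : n ∈ p.coeff.support
  · have hle : m n ≤ p.coeff.support.sup m := Finset.le_sup hn
    calc f ^ p.coeff.support.sup m * p.coeff n
        = f ^ (p.coeff.support.sup m - m n) * (f ^ m n * p.coeff n) := by
          rw [← mul_assoc, ← pow_add, Nat.sub_add_cancel hle]
      _ = 0 := by rw [hm n, mul_zero]
  · rw [Finsupp.notMem_support_iff.mp hn, mul_zero]

lemma exists_good_rep {k A : Type*} [CommRing k] [CommRing A] [Algebra k A]
    (θ : A →ₐ[k] A) (f : A) (hf : θ f = -f)
    (θ' : Localization.Away f →ₐ[k] Localization.Away f)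
    (hcomm : ∀ x : A, θ' (algebraMap A (Localization.Away f) x) =
      algebraMap A (Localization.Away f) (θ x))
    (c : ℤ) (a : Localization.Away f) (ha : θ' a = c • a) :
    ∃ (m : ℕ) (x : A), θ x = c • x ∧
      a * algebraMap A (Localization.Away f) f ^ (2 * m) =
        algebraMap A (Localization.Away f) x := by
  set g := algebraMap A (Localization.Away f) with hg
  have hθf_even : ∀ j : ℕ, θ (f ^ (2 * j)) = f ^ (2 * j) := by
    intro j
    rw [map_pow, hf, pow_mul, pow_mul, neg_sq]
  -- first get an even-power representation
  obtain ⟨n, x₀, hx₀⟩ := IsLocalization.Away.surj (S := Localization.Away f) f a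
  have heven : a * g f ^ (2 * n) = g (x₀ * f ^ n) := by
    rw [map_mul, ← hx₀, map_pow, two_mul, pow_add, mul_assoc]
  set x₁ := x₀ * f ^ n with hx₁
  -- apply θ'
  have happ : (c • a) * g f ^ (2 * n) = g (θ x₁) := by
    have h2 := congrArg θ' heven
    rw [map_mul, ha, ← map_pow g, hcomm, hθf_even, map_pow, hcomm] at h2
    exact h2
  have hgeq : g (θ x₁) = g (c • x₁) := by
    rw [← happ, smul_mul_assoc, heven, map_zsmul]
  obtain ⟨l, hl⟩ := IsLocalization.Away.exists_of_eq (S := Localization.Away f) (x := f) hgeq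
  refine ⟨n + l, f ^ (2 * l) * x₁, ?_, ?_⟩
  · simp only [zsmul_eq_mul] at hl ⊢
    rw [map_mul, hθf_even]
    linear_combination (f ^ l) * hl
  · rw [map_mul, ← heven, map_pow]
    ring

lemma contraction_surj {k A : Type*} [CommRing k] [CommRing A] [Algebra k A]
    (θ : A →ₐ[k] A) (f : A) (hf : θ f = -f)
    (θ' : Localization.Away f →ₐ[k] Localization.Away f)
    (hcomm : ∀ x : A, θ' (algebraMap A (Localization.Away f) x) =
      algebraMap A (Localization.Away f) (θ x))
    (Φ : LaurentPolynomial A →ₐ[k] LaurentPolynomial (Localization.Away f))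
    (hΦ : ∀ (a : A) (n : ℤ),
      Φ (C a * T n) = C (algebraMap A (Localization.Away f) a) * T n)
    (z : LaurentPolynomial (Localization.Away f))
    (hz : z ∈ contraction k (Localization.Away f) θ') :
    ∃ (N : ℕ) (x : LaurentPolynomial A), x ∈ contraction k A θ ∧
      z * (C (algebraMap A (Localization.Away f) f) * T 1) ^ N = Φ x := by
  set g := algebraMap A (Localization.Away f) with hg
  induction hz using Algebra.adjoin_induction with
  | algebraMap r =>
      refine ⟨0, algebraMap k _ r, Subalgebra.algebraMap_mem _ r, ?_⟩
      rw [pow_zero, mul_one, AlgHom.commutes]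
  | add z₁ z₂ h₁ h₂ ih₁ ih₂ =>
      obtain ⟨N₁, x₁, m₁, e₁⟩ := ih₁
      obtain ⟨N₂, x₂, m₂, e₂⟩ := ih₂
      have hsA : (C f * T 1 : LaurentPolynomial A) ∈ contraction k A θ := by
        have h1 : (C f * T (-1) : LaurentPolynomial A) ∈ contraction k A θ :=
          Algebra.subset_adjoin (Set.mem_insert_iff.mpr
            (Or.inr (Set.mem_union_right _ ⟨f, hf, rfl⟩)))
        have h2 : (T 2 : LaurentPolynomial A) ∈ contraction k A θ :=
          Algebra.subset_adjoin (Set.mem_insert _ _)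
        have := mul_mem h1 h2
        rwa [mul_assoc, ← T_add, show (-1 + 2 : ℤ) = 1 by norm_num] at this
      refine ⟨N₁ + N₂, x₁ * (C f * T 1) ^ N₂ + x₂ * (C f * T 1) ^ N₁,
        add_mem (mul_mem m₁ (pow_mem hsA N₂)) (mul_mem m₂ (pow_mem hsA N₁)), ?_⟩
      rw [map_add, map_mul, map_mul, map_pow, map_pow, hΦ f 1, ← e₁, ← e₂]
      ring
  | mul z₁ z₂ h₁ h₂ ih₁ ih₂ =>
      obtain ⟨N₁, x₁, m₁, e₁⟩ := ih₁
      obtain ⟨N₂, x₂, m₂, e₂⟩ := ih₂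
      exact ⟨N₁ + N₂, x₁ * x₂, mul_mem m₁ m₂, by rw [map_mul, ← e₁, ← e₂]; ring⟩
  | mem w hw =>
      rcases hw with rfl | hw
      · -- w = T 2
        refine ⟨0, T 2, Algebra.subset_adjoin (Set.mem_insert _ _), ?_⟩
        have h2 : Φ (T 2) = T 2 := by simpa using hΦ 1 2
        rw [pow_zero, mul_one, h2]
      rcases hw with ⟨a, ha, rfl⟩ | ⟨a, ha, rfl⟩
      · -- w = C a, θ' a = a
        obtain ⟨m, x, hθx, hx⟩ := exists_good_rep θ f hf θ' hcomm 1 a (by simpa using ha)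
        rw [one_smul] at hθx
        refine ⟨2 * m, C x * T 2 ^ m,
          mul_mem (Algebra.subset_adjoin (Set.mem_insert_iff.mpr
            (Or.inr (Set.mem_union_left _ ⟨x, hθx, rfl⟩))))
            (pow_mem (Algebra.subset_adjoin (Set.mem_insert _ _)) m), ?_⟩
        rw [T_pow, hΦ x, mul_pow, ← C.map_pow, T_pow,
          ← mul_assoc, ← C.map_mul, hx]
        congr 1
        congr 1
        push_cast
        ring
      · -- w = C a * T (-1), θ' a = -a
        obtain ⟨m, x, hθx, hx⟩ := exists_good_rep θ f hf θ' hcomm (-1) a (by simpa using ha)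
        rw [neg_smul, one_smul] at hθx
        refine ⟨2 * m, C x * T (-1) * T 2 ^ m,
          mul_mem (Algebra.subset_adjoin (Set.mem_insert_iff.mpr
            (Or.inr (Set.mem_union_right _ ⟨x, hθx, rfl⟩))))
            (pow_mem (Algebra.subset_adjoin (Set.mem_insert _ _)) m), ?_⟩
        rw [T_pow, mul_T_assoc, hΦ x, mul_pow, ← C.map_pow, T_pow,
          mul_mul_mul_comm, ← C.map_mul, hx, ← T_add]
        congr 1
        congr 1
        push_cast
        ring

end AuxLemmas

/-!
STATEMENT 12: let `f ∈ A^{-θ}`.  Then `θ` extends uniquely to an involution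
of `A_f`, and the contraction algebra of `(A_f, θ)` is canonically isomorphic
to the localization of `𝐀` at the element `√t·f ∈ 𝐀`. -/
set_option maxHeartbeats 2000000 in
set_option synthInstance.maxHeartbeats 400000 in
theorem contraction_localization_antifixed
    (k A : Type*) [CommRing k] [CommRing A] [Algebra k A] [Invertible (2 : k)]
    (θ : A →ₐ[k] A) (hθ : θ.comp θ = AlgHom.id k A)
    (f : A) (hf : θ f = -f) :
    (∃! θ' : Localization.Away f →ₐ[k] Localization.Away f,
        ∀ x : A, θ' (algebraMap A (Localization.Away f) x) =
          algebraMap A (Localization.Away f) (θ x)) ∧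
    ∀ (θ' : Localization.Away f →ₐ[k] Localization.Away f),
      (∀ x : A, θ' (algebraMap A (Localization.Away f) x) =
          algebraMap A (Localization.Away f) (θ x)) →
      (θ'.comp θ' = AlgHom.id k (Localization.Away f)) ∧
      ∀ (Φ : LaurentPolynomial A →ₐ[k] LaurentPolynomial (Localization.Away f)),
        (∀ (a : A) (n : ℤ),
          Φ (C a * T n) = C (algebraMap A (Localization.Away f) a) * T n) →
        ∃ e : ↥(contraction k (Localization.Away f) θ') ≃ₐ[k]
            Localization.Away
              (⟨C f * T 1, CMulT_mem_contraction θ hf⟩ : ↥(contraction k A θ)),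
          ∀ (x : ↥(contraction k A θ))
            (hx : Φ (x : LaurentPolynomial A) ∈ contraction k (Localization.Away f) θ'),
            e ⟨Φ (x : LaurentPolynomial A), hx⟩ =
              algebraMap ↥(contraction k A θ)
                (Localization.Away
                  (⟨C f * T 1, CMulT_mem_contraction θ hf⟩ : ↥(contraction k A θ))) x := by
  classical
  set R := Localization.Away f with hR
  set g := algebraMap A R with hg
  -- the canonical extension θ'₀
  have hgf_unit : IsUnit ((g.comp θ.toRingHom) f) := by
    simp only [RingHom.coe_comp, Function.comp_apply, AlgHom.toRingHom_eq_coe, RingHom.coe_coe,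
      hf, map_neg]
    exact (IsLocalization.Away.algebraMap_isUnit f).neg
  let θ₀ : R →+* R := IsLocalization.Away.lift (S := R) f hgf_unit
  have hθ₀ : ∀ x : A, θ₀ (g x) = g (θ x) := fun x => IsLocalization.Away.lift_eq f hgf_unit x
  let θ'₀ : R →ₐ[k] R :=
    { θ₀ with
      commutes' := fun c => by
        have h1 : (algebraMap k R) c = g (algebraMap k A c) :=
          IsScalarTower.algebraMap_apply k A R c
        show θ₀ (algebraMap k R c) = algebraMap k R c
        rw [h1, hθ₀, AlgHom.commutes] }
  have hθ'₀ : ∀ x : A, θ'₀ (g x) = g (θ x) := hθ₀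
  have huniq : ∀ (σ τ : R →ₐ[k] R), (∀ x, σ (g x) = τ (g x)) → σ = τ := by
    intro σ τ h
    have h2 : σ.toRingHom = τ.toRingHom :=
      IsLocalization.ringHom_ext (Submonoid.powers f) (RingHom.ext h)
    exact AlgHom.ext fun x => RingHom.congr_fun h2 x
  constructor
  · exact ⟨θ'₀, hθ'₀, fun σ hσ => huniq σ θ'₀ fun x => by rw [hσ x, hθ'₀ x]⟩
  intro θ' hcomm
  have hθθ : ∀ x : A, θ (θ x) = x := fun x => AlgHom.congr_fun hθ x
  constructor
  · exact huniq (θ'.comp θ') (AlgHom.id k R) fun x => by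
      rw [AlgHom.comp_apply, hcomm, hcomm, hθθ, AlgHom.id_apply]
  intro Φ hΦ
  -- Φ maps the contraction of A into the contraction of R
  have hmem : ∀ x ∈ contraction k A θ, Φ x ∈ contraction k R θ' := by
    intro x hx
    induction hx using Algebra.adjoin_induction with
    | algebraMap r => rw [AlgHom.commutes]; exact Subalgebra.algebraMap_mem _ r
    | add z₁ z₂ h₁ h₂ ih₁ ih₂ => rw [map_add]; exact add_mem ih₁ ih₂
    | mul z₁ z₂ h₁ h₂ ih₁ ih₂ => rw [map_mul]; exact mul_mem ih₁ ih₂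
    | mem w hw =>
        rcases hw with rfl | hw
        · have h2 : Φ (T 2) = T 2 := by simpa using hΦ 1 2
          rw [h2]
          exact Algebra.subset_adjoin (Set.mem_insert _ _)
        rcases hw with ⟨a, ha, rfl⟩ | ⟨a, ha, rfl⟩
        · have h2 : Φ (C a) = C (g a) := by simpa using hΦ a 0
          rw [h2]
          exact Algebra.subset_adjoin (Set.mem_insert_iff.mpr (Or.inr
            (Set.mem_union_left _ ⟨g a, by rw [hcomm, ha], rfl⟩)))
        · rw [hΦ a (-1)]
          exact Algebra.subset_adjoin (Set.mem_insert_iff.mpr (Or.inr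
            (Set.mem_union_right _ ⟨g a, by rw [hcomm, ha, map_neg], rfl⟩)))
  set s : ↥(contraction k A θ) := ⟨C f * T 1, CMulT_mem_contraction θ hf⟩ with hs
  let ψ : ↥(contraction k A θ) →ₐ[k] ↥(contraction k R θ') :=
    ((Φ.comp (contraction k A θ).val).codRestrict (contraction k R θ')
      (fun x => hmem x.1 x.2))
  have hψval : ∀ x : ↥(contraction k A θ), (ψ x : LaurentPolynomial R) = Φ x.1 := fun _ => rfl
  letI : Algebra ↥(contraction k A θ) ↥(contraction k R θ') := ψ.toRingHom.toAlgebra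
  have halg : ∀ x, algebraMap ↥(contraction k A θ) ↥(contraction k R θ') x = ψ x := fun _ => rfl
  haveI : IsScalarTower k ↥(contraction k A θ) ↥(contraction k R θ') :=
    IsScalarTower.of_algebraMap_eq fun c => (ψ.commutes c).symm
  -- ψ s is a unit
  obtain ⟨v, hv⟩ := isUnit_iff_exists_inv.mp (IsLocalization.Away.algebraMap_isUnit (S := R) f)
  have hθ'v : θ' v = -v := by
    have h1 : θ' (g f) * θ' v = 1 := by rw [← map_mul, hv, map_one]
    rw [hcomm, hf, map_neg] at h1
    have h2 : g f * (-θ' v) = g f * v := by rw [hv, mul_neg, ← neg_mul, h1]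
    have h3 := (IsLocalization.Away.algebraMap_isUnit (S := R) f).mul_left_cancel h2
    exact neg_eq_iff_eq_neg.mp h3
  have hvmem : (C v * T (-1) : LaurentPolynomial R) ∈ contraction k R θ' :=
    Algebra.subset_adjoin (Set.mem_insert_iff.mpr (Or.inr
      (Set.mem_union_right _ ⟨v, hθ'v, rfl⟩)))
  have hψs_unit : IsUnit (algebraMap ↥(contraction k A θ) ↥(contraction k R θ') s) := by
    refine IsUnit.of_mul_eq_one ⟨C v * T (-1), hvmem⟩ (Subtype.ext ?_)
    show (ψ s : LaurentPolynomial R) * (C v * T (-1)) = 1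
    rw [hψval, hs, hΦ f 1, mul_mul_mul_comm, ← C.map_mul, hv, ← T_add]
    norm_num
  -- the localization instance
  haveI loc : IsLocalization.Away s ↥(contraction k R θ') := by
    refine IsLocalization.Away.mk s hψs_unit (fun z => ?_) (fun x y hxy => ?_)
    · obtain ⟨N, x, hxmem, hEq⟩ := contraction_surj θ f hf θ' hcomm Φ hΦ z.1 z.2
      refine ⟨N, ⟨x, hxmem⟩, Subtype.ext ?_⟩
      show (z : LaurentPolynomial R) * ((ψ s : LaurentPolynomial R)) ^ N = Φ x
      rw [hψval, hs, hΦ f 1]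
      exact hEq
    · have h0 : Φ (x.1 - y.1) = 0 := by
        rw [map_sub, sub_eq_zero]
        exact congrArg Subtype.val hxy
      have hzero : ∀ n : ℤ, g ((x.1 - y.1).coeff n) = 0 := by
        intro n
        rw [← phi_coeff g Φ hΦ (x.1 - y.1) n, h0]
        rfl
      obtain ⟨N, hN⟩ := exists_pow_annihilates f (x.1 - y.1) hzero
      refine ⟨N, Subtype.ext ?_⟩
      show (s : LaurentPolynomial A) ^ N * x.1 = (s : LaurentPolynomial A) ^ N * y.1
      rw [← sub_eq_zero, ← mul_sub, hs]
      show (C f * T 1) ^ N * (x.1 - y.1) = 0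
      rw [mul_pow, ← C.map_pow, T_pow, mul_comm (C (f ^ N)) (T (↑N * 1)), mul_assoc, hN,
        mul_zero]
  let e₀ : ↥(contraction k R θ') ≃ₐ[↥(contraction k A θ)] Localization.Away s :=
    IsLocalization.algEquiv (Submonoid.powers s) _ _
  refine ⟨e₀.restrictScalars k, fun x hx => ?_⟩
  have hx' : (⟨Φ x.1, hx⟩ : ↥(contraction k R θ')) =
      algebraMap ↥(contraction k A θ) ↥(contraction k R θ') x := Subtype.ext rfl
  rw [hx']
  exact e₀.commutes x
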